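/- Let A ∈ Mat_N(ℤ) with single eigenvalue λ ∈ ℤ, λ < -1, non-diagonalizable, largest Jordan block size ℓ+1, and π = φ_{(A-λI)^ℓ}. Then for all P ∈ 𝔾_m^N(ℚ̄), ĥ_A⁺(P) = max{h(π(P)), h(π(P)^{-1})}/(ℓ!·|λ|^ℓ). -/

import Mathlib

open Filter NumberField IsDedekindDomain
open scoped Classical

noncomputable section

/-- The logarithm of the normalized absolute value of `a` at the finite place `v` of the
number field `K`:  `log ‖a‖_v = -(additive valuation of a) * log (norm of v)`. -/
def finVal (K : Type*) [Field K] [NumberField K]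
    (v : HeightOneSpectrum (𝓞 K)) (a : K) : ℝ :=
  if h : a = 0 then 0
  else (Multiplicative.toAdd (WithZero.unzero ((v.valuation K).ne_zero_iff.mpr h)) : ℤ) *
    Real.log (Ideal.absNorm v.asIdeal)

/-- The absolute logarithmic Weil height of a tuple of elements of a number field `K`:
`h(P) = Σ_{v ∈ M_K} max {0, log ‖x₁‖_v, …, log ‖x_N‖_v}` with suitably normalized
absolute values. -/
def logHeight (K : Type*) [Field K] [NumberField K] {N : ℕ} (x : Fin N → K) : ℝ :=
  (Module.finrank ℚ K : ℝ)⁻¹ *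
    ((∑ w : InfinitePlace K, (w.mult : ℝ) * ⨆ i, max 0 (Real.log (w (x i)))) +
     ∑ᶠ v : HeightOneSpectrum (𝓞 K), ⨆ i, max 0 (finVal K v (x i)))

/-- The height of a point of `𝔾_m^N(K)`. -/
def uHeight (K : Type*) [Field K] [NumberField K] {N : ℕ} (x : Fin N → Kˣ) : ℝ :=
  logHeight K (fun i => (x i : K))

/-- The monomial map associated to an integer matrix `A`:
`φ_A(x₁,…,x_N) = (∏ x_j^{a_{1j}}, …, ∏ x_j^{a_{Nj}})`. -/
def phi {G : Type*} [CommGroup G] {N : ℕ} (A : Matrix (Fin N) (Fin N) ℤ)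
    (x : Fin N → G) : Fin N → G :=
  fun i => ∏ j, (x j) ^ (A i j)




section AddLike

variable {G : Type*} [CommGroup G] {g : G → ℝ}

lemma addlike_one (hg : ∀ a b, g (a * b) = g a + g b) : g 1 = 0 := by
  have := hg 1 1; simp at this; linarith

lemma addlike_inv (hg : ∀ a b, g (a * b) = g a + g b) (a : G) : g a⁻¹ = - g a := by
  have := hg a a⁻¹; rw [mul_inv_cancel, addlike_one hg] at this; linarith

lemma addlike_pow (hg : ∀ a b, g (a * b) = g a + g b) (a : G) (n : ℕ) :
    g (a ^ n) = n * g a := by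
  induction n with
  | zero => simpa using addlike_one hg
  | succ n ih => rw [pow_succ, hg, ih]; push_cast; ring

lemma addlike_zpow (hg : ∀ a b, g (a * b) = g a + g b) (a : G) (m : ℤ) :
    g (a ^ m) = m * g a := by
  rcases m with m | m
  · simpa using addlike_pow hg a m
  · rw [zpow_negSucc, addlike_inv hg, addlike_pow hg]; push_cast; ring

lemma addlike_prod (hg : ∀ a b, g (a * b) = g a + g b) {ι : Type*} (s : Finset ι)
    (f : ι → G) : g (∏ i ∈ s, f i) = ∑ i ∈ s, g (f i) := by
  classical
  induction s using Finset.induction with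
  | empty => simpa using addlike_one hg
  | insert a s hx ih =>
                    rw [Finset.prod_insert hx, Finset.sum_insert hx, hg, ih]

lemma addlike_phi (hg : ∀ a b, g (a * b) = g a + g b) {N : ℕ}
    (B : Matrix (Fin N) (Fin N) ℤ) (x : Fin N → G) (i : Fin N) :
    g (phi B x i) = ∑ j, (B i j : ℝ) * g (x j) := by
  show g (∏ j, (x j) ^ (B i j)) = _
  rw [addlike_prod hg]
  exact Finset.sum_congr rfl fun j _ => addlike_zpow hg (x j) (B i j)

end AddLike
section PhiAlg

variable {G : Type*} [CommGroup G] {N : ℕ}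

lemma zpow_finset_sum {ι : Type*} (a : G) (s : Finset ι) (f : ι → ℤ) :
    a ^ (∑ i ∈ s, f i) = ∏ i ∈ s, a ^ f i := by
  classical
  induction s using Finset.induction with
  | empty => simp
  | insert _ _ hx ih => rw [Finset.sum_insert hx, Finset.prod_insert hx, zpow_add, ih]

lemma prod_zpow' {ι : Type*} (s : Finset ι) (f : ι → G) (m : ℤ) :
    (∏ i ∈ s, f i) ^ m = ∏ i ∈ s, (f i) ^ m :=
  map_prod (zpowGroupHom m) f s

lemma phi_mul (B C : Matrix (Fin N) (Fin N) ℤ) (x : Fin N → G) :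
    phi (B * C) x = phi B (phi C x) := by
  funext i
  simp only [phi, Matrix.mul_apply]
  have : ∀ k : Fin N, (∏ j, x j ^ C k j) ^ B i k = ∏ j, x j ^ (B i k * C k j) := by
    intro k
    rw [prod_zpow']
    exact Finset.prod_congr rfl fun j _ => by rw [← zpow_mul, mul_comm]
  simp only [this]
  rw [Finset.prod_comm]
  exact Finset.prod_congr rfl fun j _ => zpow_finset_sum _ _ _

lemma phi_one (x : Fin N → G) : phi (1 : Matrix (Fin N) (Fin N) ℤ) x = x := by
  funext i
  simp [phi, Matrix.one_apply, apply_ite (fun m : ℤ => (x _) ^ m)]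

lemma phi_iterate (B : Matrix (Fin N) (Fin N) ℤ) (x : Fin N → G) (n : ℕ) :
    (phi B)^[n] x = phi (B ^ n) x := by
  induction n with
  | zero => simp [phi_one]
  | succ n ih => rw [Function.iterate_succ_apply', ih, ← phi_mul, ← pow_succ']

lemma phi_smul (m : ℤ) (B : Matrix (Fin N) (Fin N) ℤ) (x : Fin N → G) :
    phi (m • B) x = fun i => (phi B x i) ^ m := by
  funext i
  simp only [phi, Matrix.smul_apply, smul_eq_mul]
  rw [prod_zpow']
  exact Finset.prod_congr rfl fun j _ => by rw [← zpow_mul, mul_comm]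

lemma phi_neg (B : Matrix (Fin N) (Fin N) ℤ) (x : Fin N → G) :
    phi (-B) x = (phi B x)⁻¹ := by
  funext i
  simp only [phi, Pi.inv_apply, Matrix.neg_apply, zpow_neg, ← Finset.prod_inv_distrib]

end PhiAlg
section FinVal

variable {K : Type*} [Field K] [NumberField K]

lemma finVal_mul (v : HeightOneSpectrum (𝓞 K)) {a b : K} (ha : a ≠ 0) (hb : b ≠ 0) :
    finVal K v (a * b) = finVal K v a + finVal K v b := by
  rw [finVal, finVal, finVal, dif_neg (mul_ne_zero ha hb), dif_neg ha, dif_neg hb]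
  have h1 : v.valuation K (a * b) = v.valuation K a * v.valuation K b :=
    map_mul _ _ _
  have h2 : WithZero.unzero ((v.valuation K).ne_zero_iff.mpr (mul_ne_zero ha hb)) =
      WithZero.unzero ((v.valuation K).ne_zero_iff.mpr ha) *
      WithZero.unzero ((v.valuation K).ne_zero_iff.mpr hb) := by
    rw [← WithZero.coe_inj, WithZero.coe_mul, WithZero.coe_unzero, WithZero.coe_unzero,
      WithZero.coe_unzero, h1]
  rw [h2, toAdd_mul]
  push_cast
  ring

lemma finVal_eq_zero_of_valuation_eq_one (v : HeightOneSpectrum (𝓞 K)) {a : K}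
    (h : v.valuation K a = 1) : finVal K v a = 0 := by
  have ha : a ≠ 0 := by
    intro h0; rw [h0, map_zero] at h; exact zero_ne_one h
  rw [finVal, dif_neg ha]
  have : WithZero.unzero ((v.valuation K).ne_zero_iff.mpr ha) = 1 := by
    rw [← WithZero.coe_inj, WithZero.coe_unzero, h, WithZero.coe_one]
  rw [this]
  simp

lemma finite_valuation_ne_one_int {r : 𝓞 K} (hr : r ≠ 0) :
    {v : HeightOneSpectrum (𝓞 K) | v.valuation K (r : K) ≠ 1}.Finite := by
  have hspan : (Ideal.span {r} : Ideal (𝓞 K)) ≠ 0 := by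
    simpa [Ideal.span_singleton_eq_bot] using hr
  refine (Ideal.finite_factors hspan).subset ?_
  intro v hv
  simp only [Set.mem_setOf_eq] at hv ⊢
  rw [show (r : K) = algebraMap (𝓞 K) K r from rfl, v.valuation_of_algebraMap] at hv
  have hle := v.intValuation_le_one r
  rw [← v.intValuation_lt_one_iff_dvd]
  exact lt_of_le_of_ne hle hv

lemma finite_finVal_ne_zero {a : K} (ha : a ≠ 0) :
    {v : HeightOneSpectrum (𝓞 K) | finVal K v a ≠ 0}.Finite := by
  obtain ⟨x, y, hy, rfl⟩ := IsFractionRing.div_surjective (A := 𝓞 K) a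
  have hy0 : (y : 𝓞 K) ≠ 0 := nonZeroDivisors.ne_zero hy
  have hx0 : (x : 𝓞 K) ≠ 0 := by
    intro h; apply ha; rw [h]; simp
  refine ((finite_valuation_ne_one_int hx0).union (finite_valuation_ne_one_int hy0)).subset ?_
  intro v hv
  simp only [Set.mem_setOf_eq, Set.mem_union] at hv ⊢
  by_contra hcon
  push_neg at hcon
  apply hv
  apply finVal_eq_zero_of_valuation_eq_one
  rw [map_div₀, hcon.1, hcon.2, div_one]

end FinVal
section HeightMachinery

variable {K : Type*} [Field K] [NumberField K] {N : ℕ}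

/-- abbreviation for the local sup appearing in heights -/
def myS (B : Matrix (Fin N) (Fin N) ℤ) (t : Fin N → ℝ) : ℝ :=
  ⨆ i, max 0 (∑ j, (B i j : ℝ) * t j)

lemma myS_nonneg (B : Matrix (Fin N) (Fin N) ℤ) (t : Fin N → ℝ) : 0 ≤ myS B t :=
  Real.iSup_nonneg fun _ => le_max_left _ _

lemma myS_zero_right (B : Matrix (Fin N) (Fin N) ℤ) {t : Fin N → ℝ}
    (ht : ∀ j, t j = 0) : myS B t = 0 := by
  have : ∀ i, max 0 (∑ j, (B i j : ℝ) * t j) = 0 := by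
    intro i
    have : ∀ j ∈ Finset.univ, (B i j : ℝ) * t j = 0 := fun j _ => by rw [ht j, mul_zero]
    rw [Finset.sum_eq_zero this, max_self]
  simp only [myS, this]
  exact Real.iSup_const_zero

lemma myS_smul (m : ℤ) (hm : 0 ≤ m) (B : Matrix (Fin N) (Fin N) ℤ) (t : Fin N → ℝ) :
    myS (m • B) t = (m : ℝ) * myS B t := by
  have hm' : (0 : ℝ) ≤ (m : ℝ) := by exact_mod_cast hm
  rw [myS, myS, Real.mul_iSup_of_nonneg hm']
  refine iSup_congr fun i => ?_
  rw [mul_max_of_nonneg _ _ hm', mul_zero, Finset.mul_sum]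
  congr 1
  refine Finset.sum_congr rfl fun j _ => ?_
  simp only [Matrix.smul_apply, smul_eq_mul]
  push_cast
  ring

lemma myS_le_add [Nonempty (Fin N)] (B C : Matrix (Fin N) (Fin N) ℤ) (t : Fin N → ℝ) :
    myS B t ≤ myS C t + ∑ i, ∑ j, |(B i j : ℝ) - (C i j : ℝ)| * |t j| := by
  rw [myS]
  refine ciSup_le fun i => ?_
  have h1 : max 0 (∑ j, (C i j : ℝ) * t j) ≤ myS C t := by
    rw [myS]
    exact le_ciSup (f := fun i' => max 0 (∑ j, (C i' j : ℝ) * t j))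
      (Set.Finite.bddAbove (Set.finite_range _)) i
  have h2 : |∑ j, (B i j : ℝ) * t j - ∑ j, (C i j : ℝ) * t j|
      ≤ ∑ j, |(B i j : ℝ) - (C i j : ℝ)| * |t j| := by
    rw [← Finset.sum_sub_distrib]
    refine (Finset.abs_sum_le_sum_abs _ _).trans ?_
    refine Finset.sum_le_sum fun j _ => ?_
    rw [← sub_mul, abs_mul]
  have h3 : ∑ j, |(B i j : ℝ) - (C i j : ℝ)| * |t j|
      ≤ ∑ i', ∑ j, |(B i' j : ℝ) - (C i' j : ℝ)| * |t j| := by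
    exact Finset.single_le_sum
      (f := fun i' => ∑ j, |(B i' j : ℝ) - (C i' j : ℝ)| * |t j|)
      (fun i' _ => Finset.sum_nonneg fun j _ => mul_nonneg (abs_nonneg _) (abs_nonneg _))
      (Finset.mem_univ i)
  have h4 : max 0 (∑ j, (B i j : ℝ) * t j) ≤ max 0 (∑ j, (C i j : ℝ) * t j) +
      |∑ j, (B i j : ℝ) * t j - ∑ j, (C i j : ℝ) * t j| := by
    apply max_le
    · exact add_nonneg (le_max_left _ _) (abs_nonneg _)
    · calc ∑ j, (B i j : ℝ) * t j
          ≤ (∑ j, (C i j : ℝ) * t j) + |∑ j, (B i j : ℝ) * t j - ∑ j, (C i j : ℝ) * t j| := by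
            nlinarith [le_abs_self (∑ j, (B i j : ℝ) * t j - ∑ j, (C i j : ℝ) * t j)]
        _ ≤ _ := by gcongr; exact le_max_right _ _
  calc max 0 (∑ j, (B i j : ℝ) * t j) ≤ _ := h4
    _ ≤ myS C t + ∑ i', ∑ j, |(B i' j : ℝ) - (C i' j : ℝ)| * |t j| :=
        add_le_add h1 (h2.trans h3)

lemma abs_myS_sub_le [Nonempty (Fin N)] (B C : Matrix (Fin N) (Fin N) ℤ) (t : Fin N → ℝ) :
    |myS B t - myS C t| ≤ ∑ i, ∑ j, |(B i j : ℝ) - (C i j : ℝ)| * |t j| := by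
  rw [abs_sub_le_iff]
  constructor
  · linarith [myS_le_add B C t]
  · have := myS_le_add C B t
    have he : ∀ i j, |(C i j : ℝ) - (B i j : ℝ)| = |(B i j : ℝ) - (C i j : ℝ)| :=
      fun i j => abs_sub_comm _ _
    simp only [he] at this
    linarith

lemma log_place_addlike (w : InfinitePlace K) (u u' : Kˣ) :
    Real.log (w (((u * u') : Kˣ) : K)) = Real.log (w (u : K)) + Real.log (w (u' : K)) := by
  rw [Units.val_mul, map_mul]
  exact Real.log_mul (by simp [(map_ne_zero w).mpr]) (by simp [(map_ne_zero w).mpr])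

lemma finVal_addlike (v : HeightOneSpectrum (𝓞 K)) (u u' : Kˣ) :
    finVal K v (((u * u') : Kˣ) : K) = finVal K v (u : K) + finVal K v (u' : K) := by
  rw [Units.val_mul]
  exact finVal_mul v u.ne_zero u'.ne_zero

lemma uHeight_phi_eq (x : Fin N → Kˣ) (S : Finset (HeightOneSpectrum (𝓞 K)))
    (hS : ∀ v ∉ S, ∀ j, finVal K v ((x j : K)) = 0) (B : Matrix (Fin N) (Fin N) ℤ) :
    uHeight K (phi B x) = (Module.finrank ℚ K : ℝ)⁻¹ *
      ((∑ w : InfinitePlace K, (w.mult : ℝ) * myS B (fun j => Real.log (w (x j : K)))) +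
       ∑ v ∈ S, myS B (fun j => finVal K v ((x j : K)))) := by
  rw [uHeight, logHeight]
  congr 1
  congr 1
  · refine Finset.sum_congr rfl fun w _ => ?_
    congr 1
    refine iSup_congr fun i => ?_
    congr 1
    exact addlike_phi (g := fun u : Kˣ => Real.log (w (u : K))) (log_place_addlike w) B x i
  · have hterm : ∀ v, (⨆ i, max 0 (finVal K v ((phi B x i : Kˣ) : K)))
        = myS B (fun j => finVal K v ((x j : K))) := by
      intro v
      refine iSup_congr fun i => ?_
      congr 1
      exact addlike_phi (g := fun u : Kˣ => finVal K v (u : K)) (finVal_addlike v) B x i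
    rw [finsum_congr hterm]
    refine finsum_eq_finset_sum_of_support_subset _ ?_
    intro v hv
    simp only [Finset.coe_sort_coe, Function.mem_support, ne_eq, Finset.mem_coe] at hv ⊢
    by_contra hvS
    exact hv (myS_zero_right B (hS v hvS))

lemma exists_bad_finset (x : Fin N → Kˣ) :
    ∃ S : Finset (HeightOneSpectrum (𝓞 K)), ∀ v ∉ S, ∀ j, finVal K v ((x j : K)) = 0 := by
  have hfin : (⋃ j : Fin N, {v : HeightOneSpectrum (𝓞 K) | finVal K v ((x j : K)) ≠ 0}).Finite :=
    Set.finite_iUnion fun j => finite_finVal_ne_zero (x j).ne_zero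
  refine ⟨hfin.toFinset, fun v hv j => ?_⟩
  by_contra h
  exact hv (hfin.mem_toFinset.mpr (Set.mem_iUnion.mpr ⟨j, h⟩))

end HeightMachinery
section HeightLemmas

variable {K : Type*} [Field K] [NumberField K] {N : ℕ}

/-- A total-variation style bound for the point `x` at level `S`. -/
def HPS (x : Fin N → Kˣ) (S : Finset (HeightOneSpectrum (𝓞 K))) : ℝ :=
  (Module.finrank ℚ K : ℝ)⁻¹ *
    ((∑ w : InfinitePlace K, (w.mult : ℝ) * ∑ j, |Real.log (w (x j : K))|) +
     ∑ v ∈ S, ∑ j, |finVal K v ((x j : K))|)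

lemma HPS_nonneg (x : Fin N → Kˣ) (S : Finset (HeightOneSpectrum (𝓞 K))) :
    0 ≤ HPS x S := by
  refine mul_nonneg (inv_nonneg.mpr (Nat.cast_nonneg _)) (add_nonneg ?_ ?_)
  · exact Finset.sum_nonneg fun w _ => mul_nonneg (Nat.cast_nonneg _)
      (Finset.sum_nonneg fun j _ => abs_nonneg _)
  · exact Finset.sum_nonneg fun v _ => Finset.sum_nonneg fun j _ => abs_nonneg _

lemma sum_abs_mul_le {B C : Matrix (Fin N) (Fin N) ℤ} (t : Fin N → ℝ) :
    ∑ i, ∑ j, |(B i j : ℝ) - (C i j : ℝ)| * |t j| ≤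
      (∑ i, ∑ j, |(B i j : ℝ) - (C i j : ℝ)|) * ∑ j, |t j| := by
  rw [Finset.sum_mul]
  refine Finset.sum_le_sum fun i _ => ?_
  rw [Finset.sum_mul]
  refine Finset.sum_le_sum fun j _ => ?_
  refine mul_le_mul_of_nonneg_left ?_ (abs_nonneg _)
  exact Finset.single_le_sum (f := fun j' => |t j'|) (fun j' _ => abs_nonneg _)
    (Finset.mem_univ j)

lemma abs_uHeight_phi_sub_le [Nonempty (Fin N)] (x : Fin N → Kˣ)
    (S : Finset (HeightOneSpectrum (𝓞 K)))
    (hS : ∀ v ∉ S, ∀ j, finVal K v ((x j : K)) = 0) (B C : Matrix (Fin N) (Fin N) ℤ) :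
    |uHeight K (phi B x) - uHeight K (phi C x)| ≤
      (∑ i, ∑ j, |(B i j : ℝ) - (C i j : ℝ)|) * HPS x S := by
  rw [uHeight_phi_eq x S hS B, uHeight_phi_eq x S hS C, HPS]
  set D := (Module.finrank ℚ K : ℝ)⁻¹ with hD
  have hD0 : 0 ≤ D := inv_nonneg.mpr (Nat.cast_nonneg _)
  set δ := ∑ i, ∑ j, |(B i j : ℝ) - (C i j : ℝ)| with hδ
  have hδ0 : 0 ≤ δ := Finset.sum_nonneg fun i _ => Finset.sum_nonneg fun j _ => abs_nonneg _
  rw [← mul_sub, abs_mul, abs_of_nonneg hD0]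
  have key : |(∑ w : InfinitePlace K, (w.mult : ℝ) * myS B (fun j => Real.log (w (x j : K))) +
        ∑ v ∈ S, myS B fun j => finVal K v ((x j : K))) -
      (∑ w : InfinitePlace K, (w.mult : ℝ) * myS C (fun j => Real.log (w (x j : K))) +
        ∑ v ∈ S, myS C fun j => finVal K v ((x j : K)))| ≤
      δ * ((∑ w : InfinitePlace K, (w.mult : ℝ) * ∑ j, |Real.log (w (x j : K))|) +
        ∑ v ∈ S, ∑ j, |finVal K v ((x j : K))|) := by
    have harch : ∀ w : InfinitePlace K,
        |(w.mult : ℝ) * myS B (fun j => Real.log (w (x j : K))) -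
          (w.mult : ℝ) * myS C (fun j => Real.log (w (x j : K)))| ≤
        δ * ((w.mult : ℝ) * ∑ j, |Real.log (w (x j : K))|) := by
      intro w
      rw [← mul_sub, abs_mul, abs_of_nonneg (Nat.cast_nonneg _)]
      calc (w.mult : ℝ) * |myS B _ - myS C _|
          ≤ (w.mult : ℝ) * (δ * ∑ j, |Real.log (w (x j : K))|) := by
            refine mul_le_mul_of_nonneg_left ?_ (Nat.cast_nonneg _)
            exact (abs_myS_sub_le B C _).trans (sum_abs_mul_le _)
        _ = δ * ((w.mult : ℝ) * ∑ j, |Real.log (w (x j : K))|) := by ring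
    have hfin : ∀ v ∈ S,
        |myS B (fun j => finVal K v ((x j : K))) - myS C (fun j => finVal K v ((x j : K)))| ≤
        δ * ∑ j, |finVal K v ((x j : K))| :=
      fun v _ => (abs_myS_sub_le B C _).trans (sum_abs_mul_le _)
    calc |_| ≤ |∑ w : InfinitePlace K, ((w.mult : ℝ) * myS B (fun j => Real.log (w (x j : K))) -
              (w.mult : ℝ) * myS C (fun j => Real.log (w (x j : K))))| +
            |∑ v ∈ S, (myS B (fun j => finVal K v ((x j : K))) -
              myS C (fun j => finVal K v ((x j : K))))| := by
          rw [Finset.sum_sub_distrib, Finset.sum_sub_distrib]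
          exact (abs_add_le _ _).trans_eq' (by ring_nf)
      _ ≤ (∑ w : InfinitePlace K, δ * ((w.mult : ℝ) * ∑ j, |Real.log (w (x j : K))|)) +
          ∑ v ∈ S, δ * ∑ j, |finVal K v ((x j : K))| := by
          refine add_le_add ((Finset.abs_sum_le_sum_abs _ _).trans ?_)
            ((Finset.abs_sum_le_sum_abs _ _).trans ?_)
          · exact Finset.sum_le_sum fun w _ => harch w
          · exact Finset.sum_le_sum hfin
      _ = _ := by rw [← Finset.mul_sum, ← Finset.mul_sum, mul_add]
  calc D * |_| ≤ D * (δ * _) := mul_le_mul_of_nonneg_left key hD0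
    _ = δ * (D * _) := by ring

lemma uHeight_phi_smul (x : Fin N → Kˣ) (S : Finset (HeightOneSpectrum (𝓞 K)))
    (hS : ∀ v ∉ S, ∀ j, finVal K v ((x j : K)) = 0) (m : ℤ) (hm : 0 ≤ m)
    (B : Matrix (Fin N) (Fin N) ℤ) :
    uHeight K (phi (m • B) x) = (m : ℝ) * uHeight K (phi B x) := by
  rw [uHeight_phi_eq x S hS, uHeight_phi_eq x S hS B]
  simp only [myS_smul m hm]
  have h1 : ∑ w : InfinitePlace K, (w.mult : ℝ) *
      ((m : ℝ) * myS B (fun j => Real.log (w (x j : K)))) =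
      (m : ℝ) * ∑ w : InfinitePlace K, (w.mult : ℝ) * myS B (fun j => Real.log (w (x j : K))) := by
    rw [Finset.mul_sum]
    exact Finset.sum_congr rfl fun w _ => by ring
  have h2 : ∑ v ∈ S, (m : ℝ) * myS B (fun j => finVal K v ((x j : K))) =
      (m : ℝ) * ∑ v ∈ S, myS B (fun j => finVal K v ((x j : K))) :=
    (Finset.mul_sum _ _ _).symm
  rw [h1, h2]
  ring

end HeightLemmas
section Analysis

lemma limsup_parity_subseq (f : ℕ → ℝ) (a : ℕ) {L M : ℝ}
    (h1 : Filter.Tendsto (fun k => f (2 * k + a)) Filter.atTop (nhds L))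
    (h2 : Filter.Tendsto (fun k => f (2 * k + (a + 1))) Filter.atTop (nhds M)) :
    Filter.limsup f Filter.atTop = max L M := by
  have hub : ∀ ε : ℝ, 0 < ε → ∀ᶠ n in atTop, f n ≤ max L M + ε := by
    intro ε hε
    have e1 : ∀ᶠ k in atTop, f (2 * k + a) ≤ max L M + ε :=
      h1.eventually (eventually_le_nhds (lt_of_le_of_lt (le_max_left L M)
        (lt_add_of_pos_right _ hε)))
    have e2 : ∀ᶠ k in atTop, f (2 * k + (a + 1)) ≤ max L M + ε :=
      h2.eventually (eventually_le_nhds (lt_of_le_of_lt (le_max_right L M)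
        (lt_add_of_pos_right _ hε)))
    obtain ⟨K1, hK1⟩ := eventually_atTop.mp e1
    obtain ⟨K2, hK2⟩ := eventually_atTop.mp e2
    rw [eventually_atTop]
    refine ⟨2 * K1 + 2 * K2 + a + 1, fun n hn => ?_⟩
    rcases Nat.even_or_odd (n - a) with ⟨k, hk⟩ | ⟨k, hk⟩
    · have hna : n = 2 * k + a := by omega
      exact hna ▸ hK1 k (by omega)
    · have hna : n = 2 * k + (a + 1) := by omega
      exact hna ▸ hK2 k (by omega)
  have hbdd : Filter.IsBoundedUnder (· ≤ ·) Filter.atTop f :=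
    Filter.isBoundedUnder_of_eventually_le (hub 1 one_pos)
  have hfreqL : ∀ ε : ℝ, 0 < ε → ∃ᶠ n in atTop, L - ε ≤ f n := by
    intro ε hε
    have e1 : ∀ᶠ k in atTop, L - ε ≤ f (2 * k + a) :=
      h1.eventually (eventually_ge_nhds (by linarith))
    obtain ⟨K1, hK1⟩ := eventually_atTop.mp e1
    rw [Filter.frequently_atTop]
    intro m
    exact ⟨2 * (K1 + m) + a, by omega, hK1 (K1 + m) (by omega)⟩
  have hfreqM : ∀ ε : ℝ, 0 < ε → ∃ᶠ n in atTop, M - ε ≤ f n := by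
    intro ε hε
    have e2 : ∀ᶠ k in atTop, M - ε ≤ f (2 * k + (a + 1)) :=
      h2.eventually (eventually_ge_nhds (by linarith))
    obtain ⟨K2, hK2⟩ := eventually_atTop.mp e2
    rw [Filter.frequently_atTop]
    intro m
    exact ⟨2 * (K2 + m) + (a + 1), by omega, hK2 (K2 + m) (by omega)⟩
  have hcb : Filter.IsCoboundedUnder (· ≤ ·) Filter.atTop f :=
    Filter.IsCoboundedUnder.of_frequently_ge ((hfreqL 1 one_pos))
  refine le_antisymm ?_ ?_
  · refine le_of_forall_gt_imp_ge_of_dense fun c hc => ?_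
    have hε : 0 < c - max L M := by linarith
    refine Filter.limsup_le_of_le hcb ?_
    exact (hub _ hε).mono fun n h => by linarith
  · refine max_le ?_ ?_
    · by_contra h
      push_neg at h
      have := Filter.le_limsup_of_frequently_le
        (hfreqL ((L - Filter.limsup f Filter.atTop) / 2) (by linarith)) hbdd
      linarith
    · by_contra h
      push_neg at h
      have := Filter.le_limsup_of_frequently_le
        (hfreqM ((M - Filter.limsup f Filter.atTop) / 2) (by linarith)) hbdd
      linarith

lemma tendsto_choose_div_pow (ℓ : ℕ) :
    Filter.Tendsto (fun n : ℕ => (n.choose ℓ : ℝ) / (n : ℝ) ^ ℓ) Filter.atTop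
      (nhds (1 / (ℓ.factorial : ℝ))) := by
  have h1 : Filter.Tendsto
      (fun n : ℕ => (∏ i ∈ Finset.range ℓ, ((n : ℝ) - i) / n) / (ℓ.factorial : ℝ))
      Filter.atTop (nhds (1 / (ℓ.factorial : ℝ))) := by
    have hp : Filter.Tendsto (fun n : ℕ => ∏ i ∈ Finset.range ℓ, ((n : ℝ) - i) / n)
        Filter.atTop (nhds (∏ _i ∈ Finset.range ℓ, (1 : ℝ))) := by
      refine tendsto_finset_prod _ fun i _ => ?_
      have ha : Filter.Tendsto (fun n : ℕ => 1 - (i : ℝ) * ((n : ℝ))⁻¹) Filter.atTop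
          (nhds (1 - (i : ℝ) * 0)) :=
        tendsto_const_nhds.sub (tendsto_const_nhds.mul
          (tendsto_inv_atTop_zero.comp tendsto_natCast_atTop_atTop))
      rw [mul_zero, sub_zero] at ha
      refine Filter.Tendsto.congr' ?_ ha
      filter_upwards [Filter.eventually_ge_atTop 1] with n hn
      have hn0 : (n : ℝ) ≠ 0 := by positivity
      field_simp
    rw [Finset.prod_const_one] at hp
    exact hp.div_const _
  refine Filter.Tendsto.congr' ?_ h1
  filter_upwards [Filter.eventually_ge_atTop ℓ, Filter.eventually_ge_atTop 1] with n hnℓ hn1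
  have hn0 : (n : ℝ) ≠ 0 := by positivity
  have hkey : ∏ i ∈ Finset.range ℓ, ((n : ℝ) - i) = (ℓ.factorial : ℝ) * (n.choose ℓ : ℝ) := by
    have hcast : ∏ i ∈ Finset.range ℓ, ((n : ℝ) - i) =
        ((∏ i ∈ Finset.range ℓ, (n - i) : ℕ) : ℝ) := by
      rw [Nat.cast_prod]
      refine Finset.prod_congr rfl fun i hi => ?_
      rw [Nat.cast_sub (le_trans (Nat.le_of_lt_succ (Nat.lt_succ_of_lt
        (Finset.mem_range.mp hi))) hnℓ)]
    rw [hcast, ← Nat.descFactorial_eq_prod_range, Nat.descFactorial_eq_factorial_mul_choose]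
    push_cast
    ring
  have hprod : ∏ i ∈ Finset.range ℓ, ((n : ℝ) - i) / n =
      (∏ i ∈ Finset.range ℓ, ((n : ℝ) - i)) / (n : ℝ) ^ ℓ := by
    rw [Finset.prod_div_distrib, Finset.prod_const, Finset.card_range]
  rw [hprod, hkey]
  have hf0 : (ℓ.factorial : ℝ) ≠ 0 := by positivity
  field_simp

end Analysis
/-- For A = λI + 𝒩 with integer λ < -1, 𝒩^{ℓ+1} = 0 ≠ 𝒩^ℓ, and π = φ_{(A-λI)^ℓ}:
ĥ_A⁺(P) = limsup h(φ_A^n(P))/(n^ℓ·|λ|ⁿ) = max{h(π(P)), h(π(P)⁻¹)}/(ℓ!·|λ|^ℓ). -/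
theorem statement17 {N : ℕ} (lam : ℤ) (hlam : lam < -1)
    (Nc : Matrix (Fin N) (Fin N) ℤ) (ℓ : ℕ) (hℓ : 1 ≤ ℓ)
    (hnil : Nc ^ (ℓ + 1) = 0) (hne : Nc ^ ℓ ≠ 0)
    (A : Matrix (Fin N) (Fin N) ℤ)
    (hA : A = lam • (1 : Matrix (Fin N) (Fin N) ℤ) + Nc)
    (K : Type*) [Field K] [NumberField K] (P : Fin N → Kˣ) :
    Filter.limsup
      (fun n : ℕ => uHeight K ((phi A)^[n] P) / ((n : ℝ) ^ ℓ * |(lam : ℝ)| ^ n))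
      Filter.atTop
    = max (uHeight K (phi (Nc ^ ℓ) P)) (uHeight K ((phi (Nc ^ ℓ) P)⁻¹)) /
        ((ℓ.factorial : ℝ) * |(lam : ℝ)| ^ ℓ) := by
  classical
  have hN0 : N ≠ 0 := by
    intro h
    subst h
    exact hne (Subsingleton.elim _ _)
  haveI : Nonempty (Fin N) := ⟨⟨0, Nat.pos_of_ne_zero hN0⟩⟩
  obtain ⟨S, hS⟩ := exists_bad_finset P
  set lr : ℝ := |(lam : ℝ)| with hlr
  have hlamR : (lam : ℝ) < -1 := by exact_mod_cast hlam
  have hlamneg : (lam : ℝ) < 0 := by linarith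
  have hlr1 : (1 : ℝ) ≤ lr := by
    rw [hlr, abs_of_neg hlamneg]
    linarith
  have hlr0 : (0 : ℝ) < lr := by linarith
  set H1 := uHeight K (phi (Nc ^ ℓ) P) with hH1
  set H2 := uHeight K ((phi (Nc ^ ℓ) P)⁻¹) with hH2
  have hH2' : H2 = uHeight K (phi (-(Nc ^ ℓ)) P) := by rw [hH2, ← phi_neg]
  set HP := HPS P S with hHPdef
  have hHP0 : 0 ≤ HP := HPS_nonneg P S
  set c : ℝ := (ℓ.factorial : ℝ) * lr ^ ℓ with hc
  have hc0 : 0 < c := by positivity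
  set co : ℕ → ℤ := fun n => (n.choose ℓ : ℤ) * lam ^ (n - ℓ) with hco
  -- binomial decomposition
  have hdecomp : ∀ n, ℓ ≤ n → A ^ n = co n • Nc ^ ℓ +
      ∑ k ∈ Finset.range ℓ, ((n.choose k : ℤ) * lam ^ (n - k)) • Nc ^ k := by
    intro n hn
    have hcomm : Commute Nc (lam • (1 : Matrix (Fin N) (Fin N) ℤ)) :=
      (Commute.one_right Nc).smul_right lam
    have hb : A ^ n = ∑ k ∈ Finset.range (n + 1),
        ((n.choose k : ℤ) * lam ^ (n - k)) • Nc ^ k := by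
      rw [hA, add_comm, hcomm.add_pow]
      refine Finset.sum_congr rfl fun k hk => ?_
      have h1 : (lam • (1 : Matrix (Fin N) (Fin N) ℤ)) ^ (n - k) =
          lam ^ (n - k) • (1 : Matrix (Fin N) (Fin N) ℤ) := by
        rw [smul_pow, one_pow]
      rw [h1, mul_smul_comm, mul_one, ← (Nat.cast_commute (n.choose k) _).eq,
        ← nsmul_eq_mul, ← natCast_zsmul, smul_smul]
    have hsub : ∑ k ∈ Finset.range (n + 1), ((n.choose k : ℤ) * lam ^ (n - k)) • Nc ^ k =
        ∑ k ∈ Finset.range (ℓ + 1), ((n.choose k : ℤ) * lam ^ (n - k)) • Nc ^ k := by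
      symm
      apply Finset.sum_subset (Finset.range_subset_range.mpr (by omega))
      intro k hk hk'
      simp only [Finset.mem_range] at hk hk'
      have hNck : Nc ^ k = 0 := by
        rw [show k = (ℓ + 1) + (k - (ℓ + 1)) by omega, pow_add, hnil, zero_mul]
      rw [hNck, smul_zero]
    rw [hb, hsub, Finset.sum_range_succ, add_comm]
  -- total variation of the error matrix
  set κ : ℝ := ∑ k ∈ Finset.range ℓ, (∑ i, ∑ j, |((Nc ^ k) i j : ℝ)|) with hκ
  have hκ0 : 0 ≤ κ := Finset.sum_nonneg fun k _ => Finset.sum_nonneg fun i _ =>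
    Finset.sum_nonneg fun j _ => abs_nonneg _
  -- error estimate
  have herr : ∀ n, ℓ ≤ n →
      |uHeight K (phi (A ^ n) P) - uHeight K (phi (co n • Nc ^ ℓ) P)| ≤
        (κ * HP) * (n : ℝ) ^ (ℓ - 1) * lr ^ n := by
    intro n hn
    have hn1 : 1 ≤ n := le_trans hℓ hn
    refine (abs_uHeight_phi_sub_le P S hS (A ^ n) (co n • Nc ^ ℓ)).trans ?_
    have hentry : ∀ i j, |((A ^ n) i j : ℝ) - ((co n • Nc ^ ℓ) i j : ℝ)| ≤
        ∑ k ∈ Finset.range ℓ, ((n : ℝ) ^ (ℓ - 1) * lr ^ n) * |((Nc ^ k) i j : ℝ)| := by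
      intro i j
      have hE : ((A ^ n) i j : ℝ) - ((co n • Nc ^ ℓ) i j : ℝ) =
          ∑ k ∈ Finset.range ℓ, ((n.choose k : ℝ) * (lam : ℝ) ^ (n - k)) * ((Nc ^ k) i j : ℝ) := by
        rw [hdecomp n hn]
        simp only [Matrix.add_apply, Matrix.sum_apply, Matrix.smul_apply, smul_eq_mul]
        push_cast
        ring
      rw [hE]
      refine (Finset.abs_sum_le_sum_abs _ _).trans (Finset.sum_le_sum fun k hk => ?_)
      rw [abs_mul, abs_mul]
      have h2 : |(lam : ℝ) ^ (n - k)| = lr ^ (n - k) := by rw [abs_pow]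
      have h3 : |(n.choose k : ℝ)| = (n.choose k : ℝ) := abs_of_nonneg (Nat.cast_nonneg _)
      rw [h2, h3]
      refine mul_le_mul_of_nonneg_right ?_ (abs_nonneg _)
      have h4 : (n.choose k : ℝ) ≤ (n : ℝ) ^ (ℓ - 1) := by
        have : n.choose k ≤ n ^ (ℓ - 1) :=
          (Nat.choose_le_pow n k).trans (Nat.pow_le_pow_right hn1
            (by simp only [Finset.mem_range] at hk; omega))
        exact_mod_cast this
      have h5 : lr ^ (n - k) ≤ lr ^ n := pow_le_pow_right₀ hlr1 (by omega)
      exact mul_le_mul h4 h5 (by positivity) (by positivity)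
    have hsum : ∑ i, ∑ j, |((A ^ n) i j : ℝ) - ((co n • Nc ^ ℓ) i j : ℝ)| ≤
        ((n : ℝ) ^ (ℓ - 1) * lr ^ n) * κ := by
      calc ∑ i, ∑ j, |((A ^ n) i j : ℝ) - ((co n • Nc ^ ℓ) i j : ℝ)|
          ≤ ∑ i, ∑ j, ∑ k ∈ Finset.range ℓ,
              ((n : ℝ) ^ (ℓ - 1) * lr ^ n) * |((Nc ^ k) i j : ℝ)| := by
            refine Finset.sum_le_sum fun i _ => Finset.sum_le_sum fun j _ => hentry i j
        _ = ((n : ℝ) ^ (ℓ - 1) * lr ^ n) * κ := by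
            rw [hκ, Finset.mul_sum]
            have h1 : ∀ i : Fin N, ∑ j, ∑ k ∈ Finset.range ℓ,
                ((n : ℝ) ^ (ℓ - 1) * lr ^ n) * |((Nc ^ k) i j : ℝ)| =
                ∑ k ∈ Finset.range ℓ, ∑ j, ((n : ℝ) ^ (ℓ - 1) * lr ^ n) * |((Nc ^ k) i j : ℝ)| :=
              fun i => Finset.sum_comm
            simp only [h1]
            rw [Finset.sum_comm]
            refine Finset.sum_congr rfl fun k _ => ?_
            rw [Finset.mul_sum]
            exact Finset.sum_congr rfl fun i _ => (Finset.mul_sum _ _ _).symm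
    calc (∑ i, ∑ j, |((A ^ n) i j : ℝ) - ((co n • Nc ^ ℓ) i j : ℝ)|) * HP
        ≤ (((n : ℝ) ^ (ℓ - 1) * lr ^ n) * κ) * HP :=
          mul_le_mul_of_nonneg_right hsum hHP0
      _ = (κ * HP) * (n : ℝ) ^ (ℓ - 1) * lr ^ n := by ring
  -- scaling of the main term
  have hscale : ∀ n, ℓ ≤ n → uHeight K (phi (co n • Nc ^ ℓ) P) =
      (n.choose ℓ : ℝ) * lr ^ (n - ℓ) * (if Even (n - ℓ) then H1 else H2) := by
    intro n hn
    by_cases hpar : Even (n - ℓ)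
    · rw [if_pos hpar]
      have hpos : (0 : ℤ) ≤ co n := mul_nonneg (Int.natCast_nonneg _) (hpar.pow_nonneg _)
      rw [uHeight_phi_smul P S hS (co n) hpos (Nc ^ ℓ)]
      have hcast : ((co n : ℤ) : ℝ) = (n.choose ℓ : ℝ) * lr ^ (n - ℓ) := by
        rw [hco]
        push_cast
        congr 1
        rw [hlr, ← abs_pow, abs_of_nonneg (hpar.pow_nonneg ((lam : ℝ)))]
      rw [hcast, hH1]
    · rw [if_neg hpar]
      have hodd : Odd (n - ℓ) := Nat.not_even_iff_odd.mp hpar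
      have hneg : co n • Nc ^ ℓ = (-co n) • (-(Nc ^ ℓ)) := (neg_smul_neg _ _).symm
      have hlampow : lam ^ (n - ℓ) ≤ 0 := hodd.pow_nonpos (by linarith)
      have hpos : (0 : ℤ) ≤ -co n := by
        rw [hco]
        simp only
        nlinarith [Int.natCast_nonneg (n.choose ℓ)]
      rw [hneg, uHeight_phi_smul P S hS (-co n) hpos (-(Nc ^ ℓ)), ← hH2']
      have hlampowR : ((lam : ℝ)) ^ (n - ℓ) ≤ 0 := by exact_mod_cast hlampow
      have hcast : ((-co n : ℤ) : ℝ) = (n.choose ℓ : ℝ) * lr ^ (n - ℓ) := by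
        rw [hco]
        push_cast
        rw [hlr, ← abs_pow, abs_of_nonpos hlampowR]
        ring
      rw [hcast]
  -- the quantitative claim
  have hclaim : ∀ n, ℓ ≤ n →
      |uHeight K (phi (A ^ n) P) / ((n : ℝ) ^ ℓ * lr ^ n) -
        (n.choose ℓ : ℝ) / (n : ℝ) ^ ℓ * (1 / lr ^ ℓ) * (if Even (n - ℓ) then H1 else H2)| ≤
        (κ * HP) / (n : ℝ) := by
    intro n hn
    have hn1 : 1 ≤ n := le_trans hℓ hn
    have hnR : (0 : ℝ) < (n : ℝ) := by exact_mod_cast hn1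
    have hden : (0 : ℝ) < (n : ℝ) ^ ℓ * lr ^ n := by positivity
    have hpow : lr ^ (n - ℓ) * lr ^ ℓ = lr ^ n := pow_sub_mul_pow lr hn
    have hmainterm : (n.choose ℓ : ℝ) / (n : ℝ) ^ ℓ * (1 / lr ^ ℓ) *
        (if Even (n - ℓ) then H1 else H2)
        = uHeight K (phi (co n • Nc ^ ℓ) P) / ((n : ℝ) ^ ℓ * lr ^ n) := by
      rw [hscale n hn, ← hpow]
      have h1 : (0:ℝ) < lr ^ (n - ℓ) := by positivity
      have h2 : (0:ℝ) < lr ^ ℓ := by positivity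
      field_simp
    rw [hmainterm, div_sub_div_same, abs_div, abs_of_pos hden]
    have h6 : (κ * HP) * (n : ℝ) ^ (ℓ - 1) * lr ^ n / ((n : ℝ) ^ ℓ * lr ^ n) =
        (κ * HP) / (n : ℝ) := by
      have hℓn : (n : ℝ) ^ ℓ = (n : ℝ) ^ (ℓ - 1) * (n : ℝ) := by
        rw [← pow_succ]
        congr 1
        omega
      rw [hℓn]
      have hlrn : lr ^ n ≠ 0 := by positivity
      have hn' : ((n : ℝ)) ^ (ℓ - 1) ≠ 0 := by positivity
      field_simp
    calc |uHeight K (phi (A ^ n) P) - uHeight K (phi (co n • Nc ^ ℓ) P)| /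
          ((n : ℝ) ^ ℓ * lr ^ n)
        ≤ (κ * HP) * (n : ℝ) ^ (ℓ - 1) * lr ^ n / ((n : ℝ) ^ ℓ * lr ^ n) := by
          gcongr
          exact herr n hn
      _ = (κ * HP) / (n : ℝ) := h6
  -- convergence along arithmetic progressions
  have hmain : ∀ s : ℕ, ℓ ≤ s → ∀ Hs : ℝ,
      (∀ k : ℕ, (if Even (2 * k + s - ℓ) then H1 else H2) = Hs) →
      Filter.Tendsto (fun k : ℕ => uHeight K (phi (A ^ (2 * k + s)) P) /
        (((2 * k + s : ℕ) : ℝ) ^ ℓ * lr ^ (2 * k + s))) Filter.atTop (nhds (Hs / c)) := by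
    intro s hs Hs hHs
    have hg : Filter.Tendsto (fun k : ℕ => 2 * k + s) Filter.atTop Filter.atTop :=
      Filter.tendsto_atTop_mono (fun k => by simp only [id_eq]; omega) Filter.tendsto_id
    set ms : ℕ → ℝ := fun k => ((2 * k + s).choose ℓ : ℝ) / ((2 * k + s : ℕ) : ℝ) ^ ℓ *
      (1 / lr ^ ℓ) * Hs with hms
    have hmseq : Filter.Tendsto ms Filter.atTop
        (nhds (1 / (ℓ.factorial : ℝ) * (1 / lr ^ ℓ) * Hs)) :=
      (((tendsto_choose_div_pow ℓ).comp hg).mul_const _).mul_const _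
    set fs : ℕ → ℝ := fun k => uHeight K (phi (A ^ (2 * k + s)) P) /
      (((2 * k + s : ℕ) : ℝ) ^ ℓ * lr ^ (2 * k + s)) with hfs
    have hub : ∀ k : ℕ, ‖fs k - ms k‖ ≤ (κ * HP) / ((2 * k + s : ℕ) : ℝ) := by
      intro k
      rw [Real.norm_eq_abs]
      have h := hclaim (2 * k + s) (by omega)
      rwa [hHs k] at h
    have hlim0 : Filter.Tendsto (fun k : ℕ => (κ * HP) / ((2 * k + s : ℕ) : ℝ))
        Filter.atTop (nhds 0) :=
      Filter.Tendsto.div_atTop tendsto_const_nhds (tendsto_natCast_atTop_atTop.comp hg)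
    have herr0 : Filter.Tendsto (fun k => fs k - ms k) Filter.atTop (nhds 0) :=
      squeeze_zero_norm hub hlim0
    have hsum := hmseq.add herr0
    have heq : (fun k => ms k + (fs k - ms k)) = fs := by
      funext k
      ring
    rw [heq, add_zero] at hsum
    have hval : 1 / (ℓ.factorial : ℝ) * (1 / lr ^ ℓ) * Hs = Hs / c := by
      rw [hc]
      have h1 : (ℓ.factorial : ℝ) ≠ 0 := by positivity
      have h2 : lr ^ ℓ ≠ 0 := by positivity
      field_simp
    rwa [hval] at hsum
  -- assemble
  simp only [phi_iterate]
  have heven : Filter.Tendsto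
      (fun k : ℕ => uHeight K (phi (A ^ (2 * k + ℓ)) P) /
        (((2 * k + ℓ : ℕ) : ℝ) ^ ℓ * lr ^ (2 * k + ℓ))) Filter.atTop (nhds (H1 / c)) := by
    refine hmain ℓ le_rfl H1 fun k => ?_
    rw [if_pos]
    rw [show 2 * k + ℓ - ℓ = 2 * k by omega]
    exact ⟨k, two_mul k⟩
  have hodd : Filter.Tendsto
      (fun k : ℕ => uHeight K (phi (A ^ (2 * k + (ℓ + 1))) P) /
        (((2 * k + (ℓ + 1) : ℕ) : ℝ) ^ ℓ * lr ^ (2 * k + (ℓ + 1)))) Filter.atTop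
        (nhds (H2 / c)) := by
    refine hmain (ℓ + 1) (by omega) H2 fun k => ?_
    rw [if_neg]
    rw [show 2 * k + (ℓ + 1) - ℓ = 2 * k + 1 by omega]
    simp [Nat.even_add_one, parity_simps]
  rw [limsup_parity_subseq _ ℓ heven hodd]
  exact max_div_div_right (le_of_lt hc0) H1 H2
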